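/- Primal–dual chain bound (Equation (12) in the proof that the primal–dual algorithm is an f-approximation for Set Cover Knapsack with target value): Let F be a finite set, w, α : F → ℝ≥0, d ∈ ℝ, and let i_1, …, i_m be distinct elements of F with m ≥ 1. Put A_k = {i_1, …, i_{k−1}} for 1 ≤ k ≤ m (so A_1 = ∅) and X = {i_1, …, i_m}, and write α(A) = ∑_{i∈A} α(i). Assume α(i_k) < d − α(A_k) for all 1 ≤ k < m, and ∑_{i ∈ X∖{i_m}} α(i) < d. Suppose y_1, …, y_m are nonnegative reals such that w(i_k) = ∑_{r=1}^{k} min(α(i_k), d − α(A_r)) · y_r for every 1 ≤ k ≤ m. Then ∑_{k=1}^{m} w(i_k) ≤ 2 ∑_{r=1}^{m} (d − α(A_r)) · y_r. -/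

import Mathlib

/-- Primal–dual chain bound for Set Cover Knapsack with target value: sets
`i 1, …, i m` are chosen one by one, `A_k = {i 1, …, i (k-1)}` is the collection
chosen before iteration `k`, each chosen set's weight is tight for the dual
variables `y`, the residual target stays positive before the last iteration, and
the total value short of the last set is below `d`; then the total weight of the
chosen sets is at most twice the dual objective. -/
theorem primal_dual_chain_bound {F : Type*} [DecidableEq F]
    (w α : F → ℝ) (hw : ∀ j, 0 ≤ w j) (hα : ∀ j, 0 ≤ α j) (d : ℝ)
    (m : ℕ) (hm : 1 ≤ m) (i : ℕ → F)
    (hinj : ∀ k ∈ Finset.Icc 1 m, ∀ k' ∈ Finset.Icc 1 m, i k = i k' → k = k')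
    (hres : ∀ k, 1 ≤ k → k < m →
      α (i k) < d - ∑ j ∈ (Finset.Ico 1 k).image i, α j)
    (hsum : ∑ j ∈ ((Finset.Icc 1 m).image i).erase (i m), α j < d)
    (y : ℕ → ℝ) (hy : ∀ r ∈ Finset.Icc 1 m, 0 ≤ y r)
    (htight : ∀ k ∈ Finset.Icc 1 m,
      w (i k) = ∑ r ∈ Finset.Icc 1 k,
        min (α (i k)) (d - ∑ j ∈ (Finset.Ico 1 r).image i, α j) * y r) :
    ∑ k ∈ Finset.Icc 1 m, w (i k) ≤
      2 * ∑ r ∈ Finset.Icc 1 m,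
        (d - ∑ j ∈ (Finset.Ico 1 r).image i, α j) * y r := by
  -- Convert sums over images to sums over index sets
  have himg : ∀ r ≤ m, ∑ j ∈ (Finset.Ico 1 r).image i, α j
      = ∑ k ∈ Finset.Ico 1 r, α (i k) := by
    intro r hr
    refine Finset.sum_image ?_
    intro a ha b hb hab
    rw [Finset.coe_Ico, Set.mem_Ico] at ha hb
    exact hinj a (Finset.mem_Icc.mpr ⟨ha.1, le_trans ha.2.le hr⟩)
      b (Finset.mem_Icc.mpr ⟨hb.1, le_trans hb.2.le hr⟩) hab
  have hmm : m ∈ Finset.Icc 1 m := Finset.mem_Icc.mpr ⟨hm, le_rfl⟩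
  have hnotmem : i m ∉ (Finset.Ico 1 m).image i := by
    intro h
    obtain ⟨k, hk, hki⟩ := Finset.mem_image.mp h
    rw [Finset.mem_Ico] at hk
    exact absurd (hinj k (Finset.mem_Icc.mpr ⟨hk.1, hk.2.le⟩) m hmm hki) hk.2.ne
  have herase : ((Finset.Icc 1 m).image i).erase (i m) = (Finset.Ico 1 m).image i := by
    rw [← Finset.Ico_insert_right hm, Finset.image_insert, Finset.erase_insert hnotmem]
  have hS : ∑ k ∈ Finset.Ico 1 m, α (i k) < d := by
    rwa [herase, himg m le_rfl] at hsum
  -- the key per-round bound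
  have key : ∀ r ∈ Finset.Icc 1 m,
      ∑ k ∈ Finset.Icc r m, min (α (i k)) (d - ∑ j ∈ (Finset.Ico 1 r).image i, α j)
        ≤ 2 * (d - ∑ j ∈ (Finset.Ico 1 r).image i, α j) := by
    intro r hr
    rw [Finset.mem_Icc] at hr
    set D : ℝ := d - ∑ j ∈ (Finset.Ico 1 r).image i, α j with hDdef
    have hsplit : ∑ k ∈ Finset.Ico 1 r, α (i k) + ∑ k ∈ Finset.Ico r m, α (i k)
        = ∑ k ∈ Finset.Ico 1 m, α (i k) :=
      Finset.sum_Ico_consecutive _ hr.1 hr.2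
    have htail : ∑ k ∈ Finset.Ico r m, α (i k) ≤ D := by
      rw [hDdef, himg r hr.2]
      linarith
    have h1 : ∑ k ∈ Finset.Ico r m, min (α (i k)) D ≤ D := by
      refine le_trans (Finset.sum_le_sum fun k _ => min_le_left _ _) htail
    rw [← Finset.Ico_insert_right hr.2, Finset.sum_insert Finset.right_notMem_Ico]
    have h2 : min (α (i m)) D ≤ D := min_le_right _ _
    linarith
  calc ∑ k ∈ Finset.Icc 1 m, w (i k)
      = ∑ k ∈ Finset.Icc 1 m, ∑ r ∈ Finset.Icc 1 k,
          min (α (i k)) (d - ∑ j ∈ (Finset.Ico 1 r).image i, α j) * y r :=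
        Finset.sum_congr rfl fun k hk => htight k hk
    _ = ∑ r ∈ Finset.Icc 1 m, ∑ k ∈ Finset.Icc r m,
          min (α (i k)) (d - ∑ j ∈ (Finset.Ico 1 r).image i, α j) * y r := by
        have := Finset.sum_Ico_Ico_comm 1 (m + 1)
          (fun r k => min (α (i k)) (d - ∑ j ∈ (Finset.Ico 1 r).image i, α j) * y r)
        simp only [Finset.Ico_add_one_right_eq_Icc] at this
        exact this.symm
    _ ≤ ∑ r ∈ Finset.Icc 1 m,
          2 * (d - ∑ j ∈ (Finset.Ico 1 r).image i, α j) * y r := by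
        refine Finset.sum_le_sum fun r hr => ?_
        rw [← Finset.sum_mul]
        exact mul_le_mul_of_nonneg_right (key r hr) (hy r hr)
    _ = 2 * ∑ r ∈ Finset.Icc 1 m,
          (d - ∑ j ∈ (Finset.Ico 1 r).image i, α j) * y r := by
        rw [Finset.mul_sum]; simp only [mul_assoc]
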